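/- Let a ≥ 0 and C ∈ ℝ, and let v : ℝ → ℝ be twice continuously differentiable on (a,∞) and satisfy, for all r > a, the radial Hamiltonian stationary ODE with n = 2: v''(r)/(1+v'(r)^2) + (r·v'(r) − v(r))/(r^2+v(r)^2) = C·(1+v'(r)^2)^{1/2}/(r^2+v(r)^2)^{1/2}. Then C = 0; consequently the phase θ(r) = arctan(v'(r)) + arctan(v(r)/r) is constant on (a,∞), i.e., the corresponding radial gradient graph is special Lagrangian. -/

import Mathlib

open Real Set

/-- Derivative of the phase function. -/
private lemma radial_theta_hasDerivAt (a C : ℝ) (ha : 0 ≤ a) (v : ℝ → ℝ)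
    (hv : ContDiffOn ℝ 2 v (Set.Ioi a))
    (hode : ∀ r ∈ Set.Ioi a,
      deriv (deriv v) r / (1 + (deriv v r) ^ 2)
        + (r * deriv v r - v r) / (r ^ 2 + (v r) ^ 2)
        = C * Real.sqrt (1 + (deriv v r) ^ 2) / Real.sqrt (r ^ 2 + (v r) ^ 2))
    {r : ℝ} (hr : r ∈ Set.Ioi a) :
    HasDerivAt (fun t => Real.arctan (deriv v t) + Real.arctan (v t / t))
      (C * Real.sqrt (1 + (deriv v r) ^ 2) / Real.sqrt (r ^ 2 + (v r) ^ 2)) r := by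
  have hrpos : 0 < r := lt_of_le_of_lt ha hr
  have hnhds : Set.Ioi a ∈ nhds r := isOpen_Ioi.mem_nhds hr
  have hd1 : HasDerivAt v (deriv v r) r :=
    ((hv.differentiableOn (by norm_num)).differentiableAt hnhds).hasDerivAt
  have hdv : ContDiffOn ℝ 1 (deriv v) (Set.Ioi a) :=
    hv.deriv_of_isOpen isOpen_Ioi (show (1:WithTop ℕ∞) + 1 ≤ 2 by norm_num)
  have hd2 : HasDerivAt (deriv v) (deriv (deriv v) r) r :=
    ((hdv.differentiableOn (by norm_num)).differentiableAt hnhds).hasDerivAt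
  have hden : (0:ℝ) < r ^ 2 + (v r) ^ 2 := by positivity
  have h1 : HasDerivAt (fun t => Real.arctan (deriv v t))
      (1 / (1 + (deriv v r) ^ 2) * deriv (deriv v) r) r := hd2.arctan
  have hq : HasDerivAt (fun t => v t / t)
      ((deriv v r * r - v r * 1) / r ^ 2) r := hd1.div (hasDerivAt_id r) hrpos.ne'
  have h2 : HasDerivAt (fun t => Real.arctan (v t / t))
      (1 / (1 + (v r / r) ^ 2) * ((deriv v r * r - v r * 1) / r ^ 2)) r := hq.arctan
  have h3 := h1.add h2
  refine h3.congr_deriv ?_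
  rw [← hode r hr]
  have h1ne : (1 : ℝ) + (deriv v r) ^ 2 ≠ 0 := by positivity
  field_simp

/-- Under the hypotheses, `C ≤ 0`. -/
private lemma radial_C_nonpos (a C : ℝ) (ha : 0 ≤ a) (v : ℝ → ℝ)
    (hv : ContDiffOn ℝ 2 v (Set.Ioi a))
    (hode : ∀ r ∈ Set.Ioi a,
      deriv (deriv v) r / (1 + (deriv v r) ^ 2)
        + (r * deriv v r - v r) / (r ^ 2 + (v r) ^ 2)
        = C * Real.sqrt (1 + (deriv v r) ^ 2) / Real.sqrt (r ^ 2 + (v r) ^ 2)) :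
    C ≤ 0 := by
  by_contra hC0
  push_neg at hC0
  set θ : ℝ → ℝ := fun t => Real.arctan (deriv v t) + Real.arctan (v t / t) with hθdef
  set f : ℝ → ℝ := fun t => θ t - C * ((1/2) * Real.log (t ^ 2 + (v t) ^ 2)) with hfdef
  -- derivative of f is nonnegative on Ioi a
  have hf' : ∀ x ∈ Set.Ioi a, HasDerivAt f
      (C * Real.sqrt (1 + (deriv v x) ^ 2) / Real.sqrt (x ^ 2 + (v x) ^ 2)
        - C * ((x + v x * deriv v x) / (x ^ 2 + (v x) ^ 2))) x := by
    intro x hx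
    have hxpos : 0 < x := lt_of_le_of_lt ha hx
    have hnhds : Set.Ioi a ∈ nhds x := isOpen_Ioi.mem_nhds hx
    have hd1 : HasDerivAt v (deriv v x) x :=
      ((hv.differentiableOn (by norm_num)).differentiableAt hnhds).hasDerivAt
    have hden : (0:ℝ) < x ^ 2 + (v x) ^ 2 := by positivity
    have hq : HasDerivAt (fun t => t ^ 2 + (v t) ^ 2)
        (2 * x + 2 * v x * deriv v x) x := by
      have hp1 : HasDerivAt (fun t : ℝ => t ^ 2) (2 * x) x := by
        simpa using hasDerivAt_pow 2 x
      have hp2 : HasDerivAt (fun t => (v t) ^ 2) (2 * v x * deriv v x) x := by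
        have := hd1.fun_pow 2
        simpa [mul_comm, mul_assoc, mul_left_comm] using this
      exact hp1.add hp2
    have hlog : HasDerivAt (fun t => Real.log (t ^ 2 + (v t) ^ 2))
        ((2 * x + 2 * v x * deriv v x) / (x ^ 2 + (v x) ^ 2)) x := hq.log hden.ne'
    have hψ : HasDerivAt (fun t => (1/2) * Real.log (t ^ 2 + (v t) ^ 2))
        ((x + v x * deriv v x) / (x ^ 2 + (v x) ^ 2)) x := by
      have := hlog.const_mul (1/2 : ℝ)
      refine this.congr_deriv ?_
      field_simp
    exact (radial_theta_hasDerivAt a C ha v hv hode hx).sub (hψ.const_mul C)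
  have hkey : ∀ x ∈ Set.Ioi a,
      x + v x * deriv v x ≤
        Real.sqrt (1 + (deriv v x) ^ 2) * Real.sqrt (x ^ 2 + (v x) ^ 2) := by
    intro x hx
    rw [← Real.sqrt_mul (by positivity)]
    apply Real.le_sqrt_of_sq_le
    nlinarith [sq_nonneg (v x - deriv v x * x)]
  have hf'nonneg : ∀ x ∈ Set.Ioi a, 0 ≤ deriv f x := by
    intro x hx
    rw [(hf' x hx).deriv]
    have hxpos : 0 < x := lt_of_le_of_lt ha hx
    have hden : (0:ℝ) < x ^ 2 + (v x) ^ 2 := by positivity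
    have hs : 0 < Real.sqrt (x ^ 2 + (v x) ^ 2) := Real.sqrt_pos.2 hden
    have hss : Real.sqrt (x ^ 2 + (v x) ^ 2) * Real.sqrt (x ^ 2 + (v x) ^ 2)
        = x ^ 2 + (v x) ^ 2 := Real.mul_self_sqrt hden.le
    have h1 : (x + v x * deriv v x) / (x ^ 2 + (v x) ^ 2)
        ≤ Real.sqrt (1 + (deriv v x) ^ 2) / Real.sqrt (x ^ 2 + (v x) ^ 2) := by
      rw [div_le_div_iff₀ hden hs]
      have h3 := mul_le_mul_of_nonneg_right (hkey x hx) hs.le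
      calc (x + v x * deriv v x) * Real.sqrt (x ^ 2 + (v x) ^ 2)
          ≤ Real.sqrt (1 + (deriv v x) ^ 2) * Real.sqrt (x ^ 2 + (v x) ^ 2)
            * Real.sqrt (x ^ 2 + (v x) ^ 2) := h3
        _ = Real.sqrt (1 + (deriv v x) ^ 2) * (x ^ 2 + (v x) ^ 2) := by
            rw [mul_assoc, hss]
    have h2 := mul_le_mul_of_nonneg_left h1 hC0.le
    rw [sub_nonneg]
    calc C * ((x + v x * deriv v x) / (x ^ 2 + (v x) ^ 2))
        ≤ C * (Real.sqrt (1 + (deriv v x) ^ 2) / Real.sqrt (x ^ 2 + (v x) ^ 2)) := h2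
      _ = C * Real.sqrt (1 + (deriv v x) ^ 2) / Real.sqrt (x ^ 2 + (v x) ^ 2) := by ring
  have hdiff : DifferentiableOn ℝ f (Set.Ioi a) :=
    fun x hx => ((hf' x hx).differentiableAt).differentiableWithinAt
  have hmono : MonotoneOn f (Set.Ioi a) := by
    apply monotoneOn_of_deriv_nonneg (convex_Ioi a) hdiff.continuousOn
    · rw [interior_Ioi]; exact hdiff
    · rw [interior_Ioi]; exact hf'nonneg
  -- now derive a contradiction
  set r₀ : ℝ := a + 1 with hr₀def
  have hr₀ : r₀ ∈ Set.Ioi a := by simp [hr₀def]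
  set M : ℝ := f r₀ with hMdef
  set R : ℝ := max r₀ (Real.exp ((π - M) / C)) + 1 with hRdef
  have hRr₀ : r₀ ≤ R := by
    rw [hRdef]; linarith [le_max_left r₀ (Real.exp ((π - M) / C))]
  have hR : R ∈ Set.Ioi a := lt_of_lt_of_le hr₀ hRr₀
  have hRpos : 0 < R := lt_of_le_of_lt ha hR
  have hfle : M ≤ f R := hmono hr₀ hR hRr₀
  clear_value θ f M R r₀
  -- log bound : log R > (π - M)/C
  have hRexp : Real.exp ((π - M) / C) < R := by
    rw [hRdef]; linarith [le_max_right r₀ (Real.exp ((π - M) / C))]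
  have hlogR : (π - M) / C < Real.log R := (Real.lt_log_iff_exp_lt hRpos).2 hRexp
  have hClog : π - M < C * Real.log R := by
    rw [div_lt_iff₀ hC0] at hlogR; linarith [hlogR]
  -- lower bound for the ψ term
  have hψR : Real.log R ≤ (1/2) * Real.log (R ^ 2 + (v R) ^ 2) := by
    have h1 : Real.log (R ^ 2) ≤ Real.log (R ^ 2 + (v R) ^ 2) :=
      Real.log_le_log (by positivity) (by nlinarith [sq_nonneg (v R)])
    have h2 : Real.log (R ^ 2) = 2 * Real.log R := by
      rw [Real.log_pow]; norm_num
    linarith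
  have hθR : π ≤ θ R := by
    have h1 : M + C * ((1/2) * Real.log (R ^ 2 + (v R) ^ 2)) ≤ θ R := by
      have := hfle
      simp only [hfdef] at this
      linarith
    have h2 : C * Real.log R ≤ C * ((1/2) * Real.log (R ^ 2 + (v R) ^ 2)) :=
      mul_le_mul_of_nonneg_left hψR hC0.le
    linarith
  have hb1 : Real.arctan (deriv v R) < π / 2 := Real.arctan_lt_pi_div_two _
  have hb2 : Real.arctan (v R / R) < π / 2 := Real.arctan_lt_pi_div_two _
  have : θ R < π := by
    simp only [hθdef]; linarith
  linarith

/-- (Proposition `prop1` of Chen–Warren.)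
If `v` is twice continuously differentiable on `(a, ∞)` (`a ≥ 0`) and solves the
radial Hamiltonian stationary ODE with `n = 2`,
`v''/(1+(v')²) + (r v' − v)/(r²+v²) = C √(1+(v')²)/√(r²+v²)`,
then `C = 0` and the phase `θ(r) = arctan v'(r) + arctan (v(r)/r)` is constant on `(a,∞)`,
i.e. the corresponding radial gradient graph is special Lagrangian. -/
theorem radial_hamiltonian_stationary_dim_two_is_special_lagrangian
    (a C : ℝ) (ha : 0 ≤ a) (v : ℝ → ℝ)
    (hv : ContDiffOn ℝ 2 v (Set.Ioi a))
    (hode : ∀ r ∈ Set.Ioi a,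
      deriv (deriv v) r / (1 + (deriv v r) ^ 2)
        + (r * deriv v r - v r) / (r ^ 2 + (v r) ^ 2)
        = C * Real.sqrt (1 + (deriv v r) ^ 2) / Real.sqrt (r ^ 2 + (v r) ^ 2)) :
    C = 0 ∧ ∀ r ∈ Set.Ioi a, ∀ s ∈ Set.Ioi a,
      Real.arctan (deriv v r) + Real.arctan (v r / r)
        = Real.arctan (deriv v s) + Real.arctan (v s / s) := by
  have hC1 : C ≤ 0 := radial_C_nonpos a C ha v hv hode
  -- apply the same lemma to `-v`, which satisfies the ODE with constant `-C`
  have hdw : deriv (fun t => -v t) = fun t => -deriv v t := funext fun t => deriv.neg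
  have hodew : ∀ r ∈ Set.Ioi a,
      deriv (deriv (fun t => -v t)) r / (1 + (deriv (fun t => -v t) r) ^ 2)
        + (r * deriv (fun t => -v t) r - (fun t => -v t) r)
            / (r ^ 2 + ((fun t => -v t) r) ^ 2)
        = (-C) * Real.sqrt (1 + (deriv (fun t => -v t) r) ^ 2)
            / Real.sqrt (r ^ 2 + ((fun t => -v t) r) ^ 2) := by
    intro r hr
    have h := hode r hr
    have hrpos : 0 < r := lt_of_le_of_lt ha hr
    have hden : (0:ℝ) < r ^ 2 + (v r) ^ 2 := by positivity
    have h1ne : (1 : ℝ) + (deriv v r) ^ 2 ≠ 0 := by positivity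
    rw [hdw]
    have hdd : deriv (fun t => -deriv v t) r = -deriv (deriv v) r := deriv.neg
    rw [hdd]
    simp only [neg_sq]
    rw [show r * -deriv v r - -v r = -(r * deriv v r - v r) by ring,
      show (-C) * Real.sqrt (1 + (deriv v r) ^ 2) = -(C * Real.sqrt (1 + (deriv v r) ^ 2))
        by ring, neg_div, neg_div, neg_div, ← neg_add, h]
  have hC2 : -C ≤ 0 := radial_C_nonpos a (-C) ha (fun t => -v t) hv.neg hodew
  have hC : C = 0 := le_antisymm hC1 (by linarith)
  refine ⟨hC, ?_⟩
  subst hC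
  -- the phase has zero derivative, hence is constant
  have hθ' : ∀ x ∈ Set.Ioi a,
      HasDerivAt (fun t => Real.arctan (deriv v t) + Real.arctan (v t / t)) 0 x := by
    intro x hx
    have := radial_theta_hasDerivAt a 0 ha v hv hode hx
    simpa using this
  have hdiff : DifferentiableOn ℝ (fun t => Real.arctan (deriv v t) + Real.arctan (v t / t))
      (Set.Ioi a) := fun x hx => ((hθ' x hx).differentiableAt).differentiableWithinAt
  have hd0 : ∀ x ∈ Set.Ioi a,
      deriv (fun t => Real.arctan (deriv v t) + Real.arctan (v t / t)) x = 0 :=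
    fun x hx => (hθ' x hx).deriv
  have hmono : MonotoneOn (fun t => Real.arctan (deriv v t) + Real.arctan (v t / t))
      (Set.Ioi a) := by
    apply monotoneOn_of_deriv_nonneg (convex_Ioi a) hdiff.continuousOn
    · rw [interior_Ioi]; exact hdiff
    · rw [interior_Ioi]; intro x hx; rw [hd0 x hx]
  have hanti : AntitoneOn (fun t => Real.arctan (deriv v t) + Real.arctan (v t / t))
      (Set.Ioi a) := by
    apply antitoneOn_of_deriv_nonpos (convex_Ioi a) hdiff.continuousOn
    · rw [interior_Ioi]; exact hdiff
    · rw [interior_Ioi]; intro x hx; rw [hd0 x hx]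
  intro r hr s hs
  rcases le_total r s with h | h
  · exact le_antisymm (hmono hr hs h) (hanti hr hs h)
  · exact le_antisymm (hanti hs hr h) (hmono hs hr h)
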